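/- Let b: J → ℝ be nonvanishing and b²/σ² ∈ L¹_loc(J). Define the Feller test functions v(x) = ∫_c^x (s(x) - s(y)) · 2/(s'(y)σ²(y)) dy and v_X(x) = ∫_c^x (s(x) - s(y)) · 2b²(y)/(s'(y)σ²(y)) dy. Then for x ∈ J, both v(x) and v_X(x) are finite, and v_X(r) := lim_{x→r⁻} v_X(x) < ∞ if and only if s(r) < ∞ and the function y ↦ (s(r) - s(y)) b²(y)/(s'(y)σ²(y)) is integrable near r. -/

import Mathlib

open MeasureTheory Set Filter
open scoped ENNReal

/-- For nonvanishing `b` with `b²/σ² ∈ L¹_loc(J)`, the Feller test functions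
`v x = ∫_c^x (s x - s y)·2/(s'(y)σ²(y)) dy` and
`v_X x = ∫_c^x (s x - s y)·2b²(y)/(s'(y)σ²(y)) dy` are finite (their integrands are
interval-integrable) for `x ∈ J`, and `v_X(r) = lim_{x→r⁻} v_X(x) < ∞` (the monotone limit,
realized as a supremum in `EReal`) iff `s(r) < ∞` and
`y ↦ (s(r) - s y) b²(y)/(s'(y) σ²(y))` is integrable near `r`. -/
theorem stmt7 (ℓ r : EReal) (hlr : ℓ < r) (μ σ b : ℝ → ℝ) (c : ℝ)
    (hc : ℓ < (c : EReal) ∧ (c : EReal) < r)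
    (hμ : Measurable μ) (hσ : Measurable σ) (hb : Measurable b)
    (hσne : ∀ x : ℝ, ℓ < (x : EReal) → (x : EReal) < r → σ x ≠ 0)
    (hbne : ∀ x : ℝ, ℓ < (x : EReal) → (x : EReal) < r → b x ≠ 0)
    (hloc : ∀ K : Set ℝ, K ⊆ {x : ℝ | ℓ < (x : EReal) ∧ (x : EReal) < r} → IsCompact K →
      IntegrableOn (fun x => 1 / (σ x)^2) K volume ∧
      IntegrableOn (fun x => μ x / (σ x)^2) K volume ∧
      IntegrableOn (fun x => (b x)^2 / (σ x)^2) K volume)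
    (ρ s v vX : ℝ → ℝ) (sr vXr : EReal)
    (hρ : ∀ y : ℝ, ρ y = Real.exp (-∫ u in c..y, 2 * μ u / (σ u)^2))
    (hs : ∀ x : ℝ, s x = ∫ y in c..x, ρ y)
    (hv : ∀ x : ℝ, v x = ∫ y in c..x, (s x - s y) * (2 / (ρ y * (σ y)^2)))
    (hvX : ∀ x : ℝ, vX x = ∫ y in c..x, (s x - s y) * (2 * (b y)^2 / (ρ y * (σ y)^2)))
    (hsr : sr = ⨆ x : {x : ℝ // ℓ < (x : EReal) ∧ (x : EReal) < r}, ((s (x : ℝ) : ℝ) : EReal))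
    (hvXr : vXr = ⨆ x : {x : ℝ // (ℓ < (x : EReal) ∧ (x : EReal) < r) ∧ c ≤ x},
      ((vX (x : ℝ) : ℝ) : EReal)) :
    (∀ x : ℝ, ℓ < (x : EReal) → (x : EReal) < r →
      IntervalIntegrable (fun y => (s x - s y) * (2 / (ρ y * (σ y)^2))) volume c x
      ∧ IntervalIntegrable (fun y => (s x - s y) * (2 * (b y)^2 / (ρ y * (σ y)^2))) volume c x)
    ∧ (vXr < ⊤ ↔ sr < ⊤ ∧ ∃ x₀ : ℝ, (ℓ < (x₀ : EReal) ∧ (x₀ : EReal) < r) ∧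
        IntegrableOn (fun y => (sr.toReal - s y) * (b y)^2 / (ρ y * (σ y)^2))
          {y : ℝ | x₀ < y ∧ (y : EReal) < r} volume) := by
  obtain ⟨hcl, hcr⟩ := hc
  have hcJ : ℓ < (c : EReal) ∧ (c : EReal) < r := ⟨hcl, hcr⟩
  -- membership between two points of J
  have hmemJ : ∀ {d e y : ℝ}, (ℓ < (d : EReal) ∧ (d : EReal) < r) →
      (ℓ < (e : EReal) ∧ (e : EReal) < r) → d ≤ y → y ≤ e →
      ℓ < (y : EReal) ∧ (y : EReal) < r := by
    intro d e y hd he h1 h2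
    exact ⟨lt_of_lt_of_le hd.1 (EReal.coe_le_coe_iff.2 h1),
      lt_of_le_of_lt (EReal.coe_le_coe_iff.2 h2) he.2⟩
  have hconv : ∀ {d e : ℝ}, (ℓ < (d : EReal) ∧ (d : EReal) < r) →
      (ℓ < (e : EReal) ∧ (e : EReal) < r) →
      uIcc d e ⊆ {x : ℝ | ℓ < (x : EReal) ∧ (x : EReal) < r} := by
    intro d e hd he y hy
    rcases mem_uIcc.1 hy with ⟨h1, h2⟩ | ⟨h1, h2⟩
    · exact hmemJ hd he h1 h2
    · exact hmemJ he hd h1 h2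
  have hmaxJ : ∀ {d e : ℝ}, (ℓ < (d : EReal) ∧ (d : EReal) < r) →
      (ℓ < (e : EReal) ∧ (e : EReal) < r) →
      ℓ < ((max d e : ℝ) : EReal) ∧ ((max d e : ℝ) : EReal) < r := by
    intro d e hd he
    rcases max_choice d e with h | h <;> rw [h]
    exacts [hd, he]
  -- continuity of ρ and s on compact subintervals of J
  have hcont : ∀ d e : ℝ, (ℓ < (d : EReal) ∧ (d : EReal) < r) →
      (ℓ < (e : EReal) ∧ (e : EReal) < r) →
      ContinuousOn ρ (uIcc d e) ∧ ContinuousOn s (uIcc d e) := by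
    intro d e hd he
    set d' := min c (min d e) with hd'def
    set e' := max c (max d e) with he'def
    have hd' : ℓ < (d' : EReal) ∧ (d' : EReal) < r := by
      rcases min_choice c (min d e) with h | h
      · rw [hd'def, h]; exact hcJ
      · rw [hd'def, h]
        rcases min_choice d e with h2 | h2 <;> rw [h2]
        exacts [hd, he]
    have he' : ℓ < (e' : EReal) ∧ (e' : EReal) < r := by
      rcases max_choice c (max d e) with h | h
      · rw [he'def, h]; exact hcJ
      · rw [he'def, h]; exact hmaxJ hd he
    have hde' : d' ≤ e' := le_trans (min_le_left _ _) (le_max_left _ _)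
    have hcmem : c ∈ uIcc d' e' := by
      rw [uIcc_of_le hde']
      exact ⟨min_le_left _ _, le_max_left _ _⟩
    have hsub : uIcc d e ⊆ uIcc d' e' := by
      apply uIcc_subset_uIcc <;> rw [uIcc_of_le hde']
      · exact ⟨le_trans (min_le_right _ _) (min_le_left _ _),
          le_trans (le_max_left _ _) (le_max_right _ _)⟩
      · exact ⟨le_trans (min_le_right _ _) (min_le_right _ _),
          le_trans (le_max_right _ _) (le_max_right _ _)⟩
    have hqint : IntervalIntegrable (fun u => 2 * μ u / (σ u)^2) volume d' e' := by
      have h0 := (hloc (uIcc d' e') (hconv hd' he') isCompact_uIcc).2.1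
      have h2 : IntegrableOn (fun u => 2 * (μ u / (σ u)^2)) (uIcc d' e') volume :=
        h0.const_mul 2
      have h3 : IntegrableOn (fun u => 2 * μ u / (σ u)^2) (uIcc d' e') volume := by
        have : (fun u => 2 * μ u / (σ u)^2) = fun u => 2 * (μ u / (σ u)^2) := by
          funext u; ring
        rw [this]; exact h2
      exact h3.intervalIntegrable
    have hρcont' : ContinuousOn ρ (uIcc d' e') := by
      have hρeq : ρ = fun y => Real.exp (-∫ u in c..y, 2 * μ u / (σ u)^2) := funext hρ
      rw [hρeq]
      exact Real.continuous_exp.comp_continuousOn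
        (intervalIntegral.continuousOn_primitive_interval' hqint hcmem).neg
    have hscont' : ContinuousOn s (uIcc d' e') := by
      have hseq' : s = fun x => ∫ y in c..x, ρ y := funext hs
      rw [hseq']
      exact intervalIntegral.continuousOn_primitive_interval' hρcont'.intervalIntegrable hcmem
    exact ⟨hρcont'.mono hsub, hscont'.mono hsub⟩
  have hρpos : ∀ y, 0 < ρ y := fun y => by rw [hρ]; exact Real.exp_pos _
  have hρintJ : ∀ d e : ℝ, (ℓ < (d : EReal) ∧ (d : EReal) < r) →
      (ℓ < (e : EReal) ∧ (e : EReal) < r) → IntervalIntegrable ρ volume d e :=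
    fun d e hd he => ((hcont d e hd he).1).intervalIntegrable
  have hsmono : ∀ d e : ℝ, (ℓ < (d : EReal) ∧ (d : EReal) < r) →
      (ℓ < (e : EReal) ∧ (e : EReal) < r) → d ≤ e → s d ≤ s e := by
    intro d e hd he hde
    have h1 : IntervalIntegrable ρ volume c d := hρintJ c d hcJ hd
    have h2 : IntervalIntegrable ρ volume d e := hρintJ d e hd he
    have hadd := intervalIntegral.integral_add_adjacent_intervals h1 h2
    have hnn : 0 ≤ ∫ y in d..e, ρ y :=
      intervalIntegral.integral_nonneg hde (fun u _ => (hρpos u).le)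
    rw [hs d, hs e, ← hadd]
    linarith
  -- core integrability lemmas on compact subintervals of J
  have hcore : ∀ (φ w : ℝ → ℝ) (d e : ℝ), ContinuousOn φ (uIcc d e) →
      IntegrableOn w (uIcc d e) volume →
      IntegrableOn (fun y => φ y * w y) (uIcc d e) volume :=
    fun φ w d e hφ hw => hw.continuousOn_mul hφ isCompact_uIcc
  have hφcont : ∀ (A : ℝ) (t : ℝ) (d e : ℝ), (ℓ < (d : EReal) ∧ (d : EReal) < r) →
      (ℓ < (e : EReal) ∧ (e : EReal) < r) →
      ContinuousOn (fun y => (A - s y) * t / ρ y) (uIcc d e) := by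
    intro A t d e hd he
    obtain ⟨hρc, hsc⟩ := hcont d e hd he
    exact ((continuousOn_const.sub hsc).mul continuousOn_const).div hρc
      (fun y _ => (hρpos y).ne')
  have hint1 : ∀ (A : ℝ) (d e : ℝ), (ℓ < (d : EReal) ∧ (d : EReal) < r) →
      (ℓ < (e : EReal) ∧ (e : EReal) < r) →
      IntegrableOn (fun y => (A - s y) * (2 / (ρ y * (σ y)^2))) (uIcc d e) volume := by
    intro A d e hd he
    have hw := (hloc (uIcc d e) (hconv hd he) isCompact_uIcc).1
    have h := hcore (fun y => (A - s y) * 2 / ρ y) (fun y => 1 / (σ y)^2) d e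
      (hφcont A 2 d e hd he) hw
    have heq : (fun y => (A - s y) * 2 / ρ y * (1 / (σ y)^2))
        = fun y => (A - s y) * (2 / (ρ y * (σ y)^2)) := by
      funext y; ring
    rw [heq] at h; exact h
  have hint2 : ∀ (A : ℝ) (d e : ℝ), (ℓ < (d : EReal) ∧ (d : EReal) < r) →
      (ℓ < (e : EReal) ∧ (e : EReal) < r) →
      IntegrableOn (fun y => (A - s y) * (2 * (b y)^2 / (ρ y * (σ y)^2))) (uIcc d e) volume := by
    intro A d e hd he
    have hw := (hloc (uIcc d e) (hconv hd he) isCompact_uIcc).2.2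
    have h := hcore (fun y => (A - s y) * 2 / ρ y) (fun y => (b y)^2 / (σ y)^2) d e
      (hφcont A 2 d e hd he) hw
    have heq : (fun y => (A - s y) * 2 / ρ y * ((b y)^2 / (σ y)^2))
        = fun y => (A - s y) * (2 * (b y)^2 / (ρ y * (σ y)^2)) := by
      funext y; ring
    rw [heq] at h; exact h
  have hint3 : ∀ (A : ℝ) (d e : ℝ), (ℓ < (d : EReal) ∧ (d : EReal) < r) →
      (ℓ < (e : EReal) ∧ (e : EReal) < r) →
      IntegrableOn (fun y => (A - s y) * (b y)^2 / (ρ y * (σ y)^2)) (uIcc d e) volume := by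
    intro A d e hd he
    have hw := (hloc (uIcc d e) (hconv hd he) isCompact_uIcc).2.2
    have h := hcore (fun y => (A - s y) * 1 / ρ y) (fun y => (b y)^2 / (σ y)^2) d e
      (hφcont A 1 d e hd he) hw
    have heq : (fun y => (A - s y) * 1 / ρ y * ((b y)^2 / (σ y)^2))
        = fun y => (A - s y) * (b y)^2 / (ρ y * (σ y)^2) := by
      funext y; ring
    rw [heq] at h; exact h
  have hf0int : ∀ (d e : ℝ), (ℓ < (d : EReal) ∧ (d : EReal) < r) →
      (ℓ < (e : EReal) ∧ (e : EReal) < r) →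
      IntegrableOn (fun y => 2 * (b y)^2 / (ρ y * (σ y)^2)) (uIcc d e) volume := by
    intro d e hd he
    have hw := (hloc (uIcc d e) (hconv hd he) isCompact_uIcc).2.2
    have hφ : ContinuousOn (fun y => 2 / ρ y) (uIcc d e) :=
      continuousOn_const.div (hcont d e hd he).1 (fun y _ => (hρpos y).ne')
    have h := hcore (fun y => 2 / ρ y) (fun y => (b y)^2 / (σ y)^2) d e hφ hw
    have heq : (fun y => 2 / ρ y * ((b y)^2 / (σ y)^2))
        = fun y => 2 * (b y)^2 / (ρ y * (σ y)^2) := by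
      funext y; ring
    rw [heq] at h; exact h
  -- nonnegativity facts
  have hf0nonneg : ∀ y, 0 ≤ 2 * (b y)^2 / (ρ y * (σ y)^2) := fun y =>
    div_nonneg (by positivity) (mul_nonneg (hρpos y).le (sq_nonneg _))
  have hf0pos : ∀ y : ℝ, (ℓ < (y : EReal) ∧ (y : EReal) < r) →
      0 < 2 * (b y)^2 / (ρ y * (σ y)^2) := by
    intro y hy
    have hb' : b y ≠ 0 := hbne y hy.1 hy.2
    have hσ' : σ y ≠ 0 := hσne y hy.1 hy.2
    have : (0:ℝ) < (σ y)^2 := by positivity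
    have h2 : (0:ℝ) < 2 * (b y)^2 := by positivity
    exact div_pos h2 (mul_pos (hρpos y) this)
  -- Part 1
  have part1 : ∀ x : ℝ, ℓ < (x : EReal) → (x : EReal) < r →
      IntervalIntegrable (fun y => (s x - s y) * (2 / (ρ y * (σ y)^2))) volume c x
      ∧ IntervalIntegrable (fun y => (s x - s y) * (2 * (b y)^2 / (ρ y * (σ y)^2))) volume c x := by
    intro x hx1 hx2
    exact ⟨(hint1 (s x) c x hcJ ⟨hx1, hx2⟩).intervalIntegrable,
      (hint2 (s x) c x hcJ ⟨hx1, hx2⟩).intervalIntegrable⟩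
  -- the split inequality: for c ≤ z ≤ x in J, ∫_c^z (s x - s y) f0 ≤ vX x
  have hsplit : ∀ z x : ℝ, (ℓ < (z : EReal) ∧ (z : EReal) < r) →
      (ℓ < (x : EReal) ∧ (x : EReal) < r) → c ≤ z → z ≤ x →
      (∫ y in c..z, (s x - s y) * (2 * (b y)^2 / (ρ y * (σ y)^2))) ≤ vX x := by
    intro z x hz hx hcz hzx
    have h1 : IntervalIntegrable (fun y => (s x - s y) * (2 * (b y)^2 / (ρ y * (σ y)^2)))
        volume c z := (hint2 (s x) c z hcJ hz).intervalIntegrable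
    have h2 : IntervalIntegrable (fun y => (s x - s y) * (2 * (b y)^2 / (ρ y * (σ y)^2)))
        volume z x := (hint2 (s x) z x hz hx).intervalIntegrable
    have hadd := intervalIntegral.integral_add_adjacent_intervals h1 h2
    have hnn : 0 ≤ ∫ y in z..x, (s x - s y) * (2 * (b y)^2 / (ρ y * (σ y)^2)) := by
      apply intervalIntegral.integral_nonneg hzx
      intro u hu
      have huJ : ℓ < (u : EReal) ∧ (u : EReal) < r := hmemJ hz hx hu.1 hu.2
      exact mul_nonneg (sub_nonneg.2 (hsmono u x huJ hx hu.2)) (hf0nonneg u)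
    rw [hvX x, ← hadd]
    linarith
  -- a monotone sequence exhausting the right end of J
  have hseq : ∃ u : ℕ → ℝ, Monotone u ∧ (∀ n, (ℓ < ((u n : ℝ) : EReal) ∧ ((u n : ℝ) : EReal) < r)
      ∧ c < u n) ∧ ∀ y : ℝ, (y : EReal) < r → ∃ n, y < u n := by
    rcases eq_or_ne r ⊤ with hrt | hrt
    · refine ⟨fun n => c + (n + 1), ?_, ?_, ?_⟩
      · intro m n hmn
        have : (m : ℝ) ≤ n := Nat.cast_le.2 hmn
        show c + ((m : ℝ) + 1) ≤ c + ((n : ℝ) + 1)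
        linarith
      · intro n
        have hn0 : (0:ℝ) ≤ n := n.cast_nonneg
        refine ⟨⟨lt_of_lt_of_le hcl (EReal.coe_le_coe_iff.2
          (show c ≤ c + ((n:ℝ) + 1) by linarith)), ?_⟩,
          show c < c + ((n:ℝ) + 1) by linarith⟩
        rw [hrt]; exact EReal.coe_lt_top _
      · intro y _
        obtain ⟨n, hn⟩ := exists_nat_gt (y - c)
        refine ⟨n, ?_⟩
        show y < c + ((n : ℝ) + 1)
        linarith
    · have hrb : r ≠ ⊥ := fun h => by rw [h] at hcr; exact absurd hcr (EReal.bot_lt_coe c).asymm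
      set R := r.toReal with hRdef
      have hRr : (R : EReal) = r := EReal.coe_toReal hrt hrb
      have hcR : c < R := by
        rw [← EReal.coe_lt_coe_iff]; rw [hRr]; exact hcr
      refine ⟨fun n => R - (R - c) / (n + 2), ?_, ?_, ?_⟩
      · intro m n hmn
        have h1 : (0:ℝ) < m + 2 := by positivity
        have h3 : (m:ℝ) + 2 ≤ n + 2 := by
          have : (m : ℝ) ≤ n := Nat.cast_le.2 hmn
          linarith
        have := div_le_div_of_nonneg_left (by linarith : (0:ℝ) ≤ R - c) h1 h3
        simp only []
        linarith
      · intro n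
        have h1 : (0:ℝ) < (n:ℝ) + 2 := by positivity
        have hn0 : (0:ℝ) ≤ n := n.cast_nonneg
        have h2 : (R - c) / (n + 2) < R - c :=
          div_lt_self (by linarith) (by linarith)
        have h3 : (0:ℝ) < (R - c) / (n + 2) := div_pos (by linarith) h1
        have hgt : c < R - (R - c) / (n + 2) := by linarith
        have hlt : R - (R - c) / (n + 2) < R := by linarith
        refine ⟨⟨lt_trans hcl (EReal.coe_lt_coe_iff.2 hgt), ?_⟩, hgt⟩
        rw [← hRr]
        exact EReal.coe_lt_coe_iff.2 hlt
      · intro y hy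
        have hyR : y < R := by
          rw [← EReal.coe_lt_coe_iff, hRr]; exact hy
        obtain ⟨n, hn⟩ := exists_nat_gt ((R - c) / (R - y))
        refine ⟨n, ?_⟩
        have hRy : (0:ℝ) < R - y := by linarith
        have h1 : (R - c) < (R - y) * (n + 2) := by
          have h2 : (R - c) / (R - y) < (n:ℝ) + 2 := by linarith
          calc R - c = (R - c) / (R - y) * (R - y) := by field_simp
          _ < ((n:ℝ) + 2) * (R - y) := by
              apply mul_lt_mul_of_pos_right h2 hRy
          _ = (R - y) * (n + 2) := by ring
        have h4 : (R - c) / ((n:ℝ) + 2) < R - y := by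
          rw [div_lt_iff₀ (by positivity : (0:ℝ) < (n:ℝ) + 2)]
          linarith [h1]
        show y < R - (R - c) / ((n:ℝ) + 2)
        linarith
  have hvXc0 : vX c = 0 := by rw [hvX c]; exact intervalIntegral.integral_same
  refine ⟨part1, ?_⟩
  constructor
  · -- forward direction
    intro htop
    have hvXrle : ∀ x : ℝ, (ℓ < (x : EReal) ∧ (x : EReal) < r) → c ≤ x →
        ((vX x : ℝ) : EReal) ≤ vXr := by
      intro x hx hcx
      rw [hvXr]
      exact le_iSup (fun p : {x : ℝ // (ℓ < (x : EReal) ∧ (x : EReal) < r) ∧ c ≤ x} =>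
        ((vX (p : ℝ) : ℝ) : EReal)) ⟨x, hx, hcx⟩
    set M := vXr.toReal with hMdef
    have hM : ∀ x : ℝ, (ℓ < (x : EReal) ∧ (x : EReal) < r) → c ≤ x → vX x ≤ M := by
      intro x hx hcx
      have h1 := hvXrle x hx hcx
      have h2 := EReal.toReal_le_toReal h1 (EReal.coe_ne_bot _) htop.ne
      rwa [EReal.toReal_coe] at h2
    have hMnn : 0 ≤ M := by
      have := hM c hcJ le_rfl
      rw [hvXc0] at this; exact this
    obtain ⟨u, humono, huJ, hucov⟩ := hseq
    set x₁ := u 0 with hx₁def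
    have hx₁J := (huJ 0).1
    have hcx₁ : c < x₁ := (huJ 0).2
    set F := ∫ y in c..x₁, 2 * (b y)^2 / (ρ y * (σ y)^2) with hFdef
    have hFpos : 0 < F := by
      apply intervalIntegral.intervalIntegral_pos_of_pos_on (hf0int c x₁ hcJ hx₁J).intervalIntegrable
        (fun y hy => hf0pos y (hmemJ hcJ hx₁J hy.1.le hy.2.le)) hcx₁
    have hkey : ∀ x : ℝ, (ℓ < (x : EReal) ∧ (x : EReal) < r) → x₁ ≤ x →
        (s x - s x₁) * F ≤ vX x := by
      intro x hx hx₁x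
      have hint_const : IntervalIntegrable
          (fun y => (s x - s x₁) * (2 * (b y)^2 / (ρ y * (σ y)^2))) volume c x₁ :=
        ((hf0int c x₁ hcJ hx₁J).intervalIntegrable).const_mul _
      have hint_var : IntervalIntegrable
          (fun y => (s x - s y) * (2 * (b y)^2 / (ρ y * (σ y)^2))) volume c x₁ :=
        (hint2 (s x) c x₁ hcJ hx₁J).intervalIntegrable
      calc (s x - s x₁) * F
          = ∫ y in c..x₁, (s x - s x₁) * (2 * (b y)^2 / (ρ y * (σ y)^2)) :=
            (intervalIntegral.integral_const_mul _ _).symm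
        _ ≤ ∫ y in c..x₁, (s x - s y) * (2 * (b y)^2 / (ρ y * (σ y)^2)) := by
            apply intervalIntegral.integral_mono_on hcx₁.le hint_const hint_var
            intro y hy
            have hyJ := hmemJ hcJ hx₁J hy.1 hy.2
            exact mul_le_mul_of_nonneg_right
              (by linarith [hsmono y x₁ hyJ hx₁J hy.2]) (hf0nonneg y)
        _ ≤ vX x := hsplit x₁ x hx₁J hx hcx₁.le hx₁x
    have hsbound : ∀ x : ℝ, (ℓ < (x : EReal) ∧ (x : EReal) < r) →
        s x ≤ max (s x₁) (s x₁ + M / F) := by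
      intro x hx
      rcases le_total x x₁ with h | h
      · exact le_trans (hsmono x x₁ hx hx₁J h) (le_max_left _ _)
      · have h1 := hkey x hx h
        have h2 := hM x hx (le_trans hcx₁.le h)
        have h3 : s x - s x₁ ≤ M / F := (le_div_iff₀ hFpos).2 (by linarith)
        exact le_trans (by linarith) (le_max_right _ _)
    have hsrlt : sr < ⊤ := by
      rw [hsr]
      refine lt_of_le_of_lt (iSup_le fun p => ?_)
        (EReal.coe_lt_top (max (s x₁) (s x₁ + M / F)))
      exact EReal.coe_le_coe_iff.2 (hsbound p p.2)
    have hsrbot : sr ≠ ⊥ := by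
      have h1 : ((s c : ℝ) : EReal) ≤ sr := by
        rw [hsr]
        exact le_iSup (fun p : {x : ℝ // ℓ < (x : EReal) ∧ (x : EReal) < r} =>
          ((s (p : ℝ) : ℝ) : EReal)) ⟨c, hcJ⟩
      exact ((EReal.bot_lt_coe _).trans_le h1).ne'
    set A := sr.toReal with hAdef
    have hsleA : ∀ x : ℝ, (ℓ < (x : EReal) ∧ (x : EReal) < r) → s x ≤ A := by
      intro x hx
      have h1 : ((s x : ℝ) : EReal) ≤ sr := by
        rw [hsr]
        exact le_iSup (fun p : {x : ℝ // ℓ < (x : EReal) ∧ (x : EReal) < r} =>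
          ((s (p : ℝ) : ℝ) : EReal)) ⟨x, hx⟩
      have h2 := EReal.toReal_le_toReal h1 (EReal.coe_ne_bot _) hsrlt.ne
      rwa [EReal.toReal_coe] at h2
    have happrox : ∀ ε : ℝ, 0 < ε → ∃ x : ℝ,
        (ℓ < (x : EReal) ∧ (x : EReal) < r) ∧ A - ε < s x := by
      intro ε hε
      by_contra hcon
      push_neg at hcon
      have hle : sr ≤ ((A - ε : ℝ) : EReal) := by
        rw [hsr]
        exact iSup_le fun p => EReal.coe_le_coe_iff.2 (hcon p p.2)
      have h2 := EReal.toReal_le_toReal hle hsrbot (EReal.coe_ne_top _)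
      rw [EReal.toReal_coe] at h2
      linarith
    have hbound : ∀ z : ℝ, (ℓ < (z : EReal) ∧ (z : EReal) < r) → c ≤ z →
        (∫ y in c..z, (A - s y) * (2 * (b y)^2 / (ρ y * (σ y)^2))) ≤ M + 1 := by
      intro z hz hcz
      set Fz := ∫ y in c..z, 2 * (b y)^2 / (ρ y * (σ y)^2) with hFzdef
      have hFznn : 0 ≤ Fz :=
        intervalIntegral.integral_nonneg hcz fun y _ => hf0nonneg y
      obtain ⟨x', hx'J, hx's⟩ := happrox (1 / (Fz + 1)) (by positivity)
      set x := max x' z with hxdef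
      have hxJ := hmaxJ hx'J hz
      have hzx : z ≤ x := le_max_right _ _
      have hsx : A - s x < 1 / (Fz + 1) := by
        have := hsmono x' x hx'J hxJ (le_max_left _ _)
        linarith
      have h1 : IntervalIntegrable
          (fun y => (s x - s y) * (2 * (b y)^2 / (ρ y * (σ y)^2))) volume c z :=
        (hint2 (s x) c z hcJ hz).intervalIntegrable
      have h2 : IntervalIntegrable
          (fun y => (A - s x) * (2 * (b y)^2 / (ρ y * (σ y)^2))) volume c z :=
        ((hf0int c z hcJ hz).intervalIntegrable).const_mul _
      have hdecomp : (∫ y in c..z, (A - s y) * (2 * (b y)^2 / (ρ y * (σ y)^2)))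
          = (∫ y in c..z, (s x - s y) * (2 * (b y)^2 / (ρ y * (σ y)^2)))
            + ∫ y in c..z, (A - s x) * (2 * (b y)^2 / (ρ y * (σ y)^2)) := by
        rw [← intervalIntegral.integral_add h1 h2]
        apply intervalIntegral.integral_congr
        intro y _
        ring
      have hterm2 : (∫ y in c..z, (A - s x) * (2 * (b y)^2 / (ρ y * (σ y)^2)))
          = (A - s x) * Fz := intervalIntegral.integral_const_mul _ _
      have hterm2le : (A - s x) * Fz ≤ 1 := by
        calc (A - s x) * Fz ≤ (1 / (Fz + 1)) * Fz :=
              mul_le_mul_of_nonneg_right hsx.le hFznn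
          _ ≤ (1 / (Fz + 1)) * (Fz + 1) :=
              mul_le_mul_of_nonneg_left (by linarith) (by positivity)
          _ = 1 := one_div_mul_cancel (by positivity)
      have hterm1 : (∫ y in c..z, (s x - s y) * (2 * (b y)^2 / (ρ y * (σ y)^2)))
          ≤ vX x := hsplit z x hz hxJ hcz hzx
      have hvxM : vX x ≤ M := hM x hxJ (le_trans hcz hzx)
      rw [hdecomp, hterm2]
      linarith
    refine ⟨hsrlt, c, hcJ, ?_⟩
    set S := {y : ℝ | c < y ∧ (y : EReal) < r} with hSdef
    have hSsub : ∀ n, Ioo c (u n) ⊆ S := by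
      intro n y hy
      exact ⟨hy.1, lt_trans (EReal.coe_lt_coe_iff.2 hy.2) (huJ n).1.2⟩
    have hSeq2 : S = ⋃ n, Ioo c (u n) := by
      ext y
      constructor
      · rintro ⟨h1, h2⟩
        obtain ⟨n, hn⟩ := hucov y h2
        exact mem_iUnion.2 ⟨n, h1, hn⟩
      · intro hy
        obtain ⟨n, hn⟩ := mem_iUnion.1 hy
        exact hSsub n hn
    have hSmeas : MeasurableSet S := by
      rw [hSeq2]; exact MeasurableSet.iUnion fun n => measurableSet_Ioo
    have hIoosub : ∀ n, Ioo c (u n) ⊆ uIcc c (u n) := by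
      intro n
      rw [uIcc_of_le (huJ n).2.le]
      exact Ioo_subset_Icc_self
    have haemeas : ∀ n, AEMeasurable (fun y => (A - s y) * (b y)^2 / (ρ y * (σ y)^2))
        (volume.restrict (Ioo c (u n))) := by
      intro n
      have hsae : AEMeasurable s (volume.restrict (Ioo c (u n))) :=
        (((hcont c (u n) hcJ (huJ n).1).2).mono (hIoosub n)).aemeasurable measurableSet_Ioo
      have hρae : AEMeasurable ρ (volume.restrict (Ioo c (u n))) :=
        (((hcont c (u n) hcJ (huJ n).1).1).mono (hIoosub n)).aemeasurable measurableSet_Ioo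
      exact ((aemeasurable_const.sub hsae).mul (hb.pow_const 2).aemeasurable).div
        (hρae.mul (hσ.pow_const 2).aemeasurable)
    have hmeasS : AEMeasurable (fun y => (A - s y) * (b y)^2 / (ρ y * (σ y)^2))
        (volume.restrict S) := by
      rw [hSeq2]
      exact aemeasurable_iUnion_iff.2 fun n => haemeas n
    have hgnn : ∀ y : ℝ, (ℓ < (y : EReal) ∧ (y : EReal) < r) →
        0 ≤ (A - s y) * (b y)^2 / (ρ y * (σ y)^2) := by
      intro y hy
      have := hsleA y hy
      exact div_nonneg (mul_nonneg (by linarith) (sq_nonneg _))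
        (mul_nonneg (hρpos y).le (sq_nonneg _))
    have hSJ : ∀ y, y ∈ S → (ℓ < (y : EReal) ∧ (y : EReal) < r) := by
      intro y hy
      exact ⟨lt_trans hcl (EReal.coe_lt_coe_iff.2 hy.1), hy.2⟩
    have hgnnS : 0 ≤ᵐ[volume.restrict S]
        (fun y => (A - s y) * (b y)^2 / (ρ y * (σ y)^2)) := by
      filter_upwards [ae_restrict_mem hSmeas] with y hy
      exact hgnn y (hSJ y hy)
    have hpiece : ∀ n, (∫⁻ y in Ioo c (u n),
        ENNReal.ofReal ((A - s y) * (b y)^2 / (ρ y * (σ y)^2)))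
        ≤ ENNReal.ofReal (M + 1) := by
      intro n
      have hgint_n : IntegrableOn (fun y => (A - s y) * (b y)^2 / (ρ y * (σ y)^2))
          (Ioo c (u n)) volume := (hint3 A c (u n) hcJ (huJ n).1).mono_set (hIoosub n)
      have hgnn_n : 0 ≤ᵐ[volume.restrict (Ioo c (u n))]
          (fun y => (A - s y) * (b y)^2 / (ρ y * (σ y)^2)) := by
        filter_upwards [ae_restrict_mem measurableSet_Ioo] with y hy
        exact hgnn y (hmemJ hcJ (huJ n).1 hy.1.le hy.2.le)
      rw [← ofReal_integral_eq_lintegral_ofReal hgint_n hgnn_n]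
      apply ENNReal.ofReal_le_ofReal
      have h1 : (∫ y in Ioo c (u n), (A - s y) * (b y)^2 / (ρ y * (σ y)^2))
          = ∫ y in c..(u n), (A - s y) * (b y)^2 / (ρ y * (σ y)^2) := by
        rw [intervalIntegral.integral_of_le (huJ n).2.le, integral_Ioc_eq_integral_Ioo]
      have h2 : (∫ y in c..(u n), (A - s y) * (b y)^2 / (ρ y * (σ y)^2))
          = (1/2) * ∫ y in c..(u n), (A - s y) * (2 * (b y)^2 / (ρ y * (σ y)^2)) := by
        rw [← intervalIntegral.integral_const_mul]
        apply intervalIntegral.integral_congr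
        intro y _
        ring
      have h3 := hbound (u n) (huJ n).1 (huJ n).2.le
      rw [h1, h2]
      linarith
    have hfnmeas : ∀ n, AEMeasurable ((Ioo c (u n)).indicator
        (fun t => ENNReal.ofReal ((A - s t) * (b t)^2 / (ρ t * (σ t)^2)))) volume :=
      fun n => (aemeasurable_indicator_iff measurableSet_Ioo).2
        (ENNReal.measurable_ofReal.comp_aemeasurable (haemeas n))
    have hmle : ∀ᵐ y ∂(volume : Measure ℝ), Monotone fun n => (Ioo c (u n)).indicator
        (fun t => ENNReal.ofReal ((A - s t) * (b t)^2 / (ρ t * (σ t)^2))) y := by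
      apply ae_of_all
      intro y m n hmn
      dsimp only
      by_cases hm : y ∈ Ioo c (u m)
      · have hm' : y ∈ Ioo c (u n) := ⟨hm.1, lt_of_lt_of_le hm.2 (humono hmn)⟩
        rw [Set.indicator_of_mem hm, Set.indicator_of_mem hm']
      · rw [Set.indicator_of_notMem hm]
        exact zero_le
    have hindsup : ∀ y : ℝ, (⨆ n, (Ioo c (u n)).indicator
        (fun t => ENNReal.ofReal ((A - s t) * (b t)^2 / (ρ t * (σ t)^2))) y)
        = S.indicator (fun t => ENNReal.ofReal ((A - s t) * (b t)^2 / (ρ t * (σ t)^2))) y := by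
      intro y
      by_cases hy : y ∈ S
      · obtain ⟨n, hn⟩ := hucov y hy.2
        rw [Set.indicator_of_mem hy]
        apply le_antisymm
        · refine iSup_le fun m => ?_
          by_cases hm : y ∈ Ioo c (u m)
          · rw [Set.indicator_of_mem hm]
          · rw [Set.indicator_of_notMem hm]
            exact zero_le
        · refine le_iSup_of_le n ?_
          have hyIoo : y ∈ Ioo c (u n) := ⟨hy.1, hn⟩
          rw [Set.indicator_of_mem hyIoo]
      · have hnm : ∀ n, y ∉ Ioo c (u n) := fun n hmem => hy (hSsub n hmem)
        rw [Set.indicator_of_notMem hy]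
        simp only [Set.indicator_of_notMem (hnm _)]
        exact iSup_const
    have hlin : (∫⁻ y in S, ENNReal.ofReal ((A - s y) * (b y)^2 / (ρ y * (σ y)^2)))
        ≤ ENNReal.ofReal (M + 1) := by
      rw [← lintegral_indicator hSmeas]
      calc (∫⁻ y, S.indicator
            (fun t => ENNReal.ofReal ((A - s t) * (b t)^2 / (ρ t * (σ t)^2))) y)
          = ∫⁻ y, ⨆ n, (Ioo c (u n)).indicator
            (fun t => ENNReal.ofReal ((A - s t) * (b t)^2 / (ρ t * (σ t)^2))) y :=
            lintegral_congr fun y => (hindsup y).symm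
        _ = ⨆ n, ∫⁻ y, (Ioo c (u n)).indicator
            (fun t => ENNReal.ofReal ((A - s t) * (b t)^2 / (ρ t * (σ t)^2))) y :=
            lintegral_iSup' hfnmeas hmle
        _ ≤ ENNReal.ofReal (M + 1) := by
            refine iSup_le fun n => ?_
            rw [lintegral_indicator measurableSet_Ioo]
            exact hpiece n
    refine ⟨hmeasS.aestronglyMeasurable, ?_⟩
    rw [hasFiniteIntegral_iff_ofReal hgnnS]
    exact lt_of_le_of_lt hlin ENNReal.ofReal_lt_top
  · rintro ⟨hsrlt, x₀, hx₀J, hgint⟩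
    have hsrbot : sr ≠ ⊥ := by
      have h1 : ((s c : ℝ) : EReal) ≤ sr := by
        rw [hsr]
        exact le_iSup (fun p : {x : ℝ // ℓ < (x : EReal) ∧ (x : EReal) < r} =>
          ((s (p : ℝ) : ℝ) : EReal)) ⟨c, hcJ⟩
      exact ((EReal.bot_lt_coe _).trans_le h1).ne'
    set A := sr.toReal with hAdef
    have hsleA : ∀ x : ℝ, (ℓ < (x : EReal) ∧ (x : EReal) < r) → s x ≤ A := by
      intro x hx
      have h1 : ((s x : ℝ) : EReal) ≤ sr := by
        rw [hsr]
        exact le_iSup (fun p : {x : ℝ // ℓ < (x : EReal) ∧ (x : EReal) < r} =>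
          ((s (p : ℝ) : ℝ) : EReal)) ⟨x, hx⟩
      have h2 := EReal.toReal_le_toReal h1 (EReal.coe_ne_bot _) hsrlt.ne
      rwa [EReal.toReal_coe] at h2
    set x₀' := max c x₀ with hx₀'def
    have hx₀'J := hmaxJ hcJ hx₀J
    have hS₀meas : MeasurableSet {y : ℝ | x₀ < y ∧ (y : EReal) < r} := by
      have h1 : {y : ℝ | x₀ < y ∧ (y : EReal) < r}
          = Ioi x₀ ∩ ((fun y : ℝ => (y : EReal)) ⁻¹' Iio r) := rfl
      rw [h1]
      exact measurableSet_Ioi.inter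
        (continuous_coe_real_ereal.measurable measurableSet_Iio)
    have hintT₀ : IntegrableOn (fun y => (A - s y) * (2 * (b y)^2 / (ρ y * (σ y)^2)))
        (Ioc c x₀') volume := by
      apply (hint2 A c x₀' hcJ hx₀'J).mono_set
      rw [uIcc_of_le (le_max_left c x₀)]
      exact Ioc_subset_Icc_self
    have hintS₀ : IntegrableOn (fun y => (A - s y) * (2 * (b y)^2 / (ρ y * (σ y)^2)))
        {y : ℝ | x₀ < y ∧ (y : EReal) < r} volume := by
      have h2 : IntegrableOn (fun y => 2 * ((A - s y) * (b y)^2 / (ρ y * (σ y)^2)))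
          {y : ℝ | x₀ < y ∧ (y : EReal) < r} volume := hgint.const_mul 2
      have heq : (fun y => (A - s y) * (2 * (b y)^2 / (ρ y * (σ y)^2)))
          = fun y => 2 * ((A - s y) * (b y)^2 / (ρ y * (σ y)^2)) := by
        funext y; ring
      rw [heq]; exact h2
    have hintU := hintT₀.union hintS₀
    have hUmeas : MeasurableSet (Ioc c x₀' ∪ {y : ℝ | x₀ < y ∧ (y : EReal) < r}) :=
      measurableSet_Ioc.union hS₀meas
    have hUJ : ∀ y, y ∈ Ioc c x₀' ∪ {y : ℝ | x₀ < y ∧ (y : EReal) < r} →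
        (ℓ < (y : EReal) ∧ (y : EReal) < r) := by
      intro y hy
      rcases hy with hy | hy
      · exact hmemJ hcJ hx₀'J hy.1.le hy.2
      · exact ⟨lt_trans hx₀J.1 (EReal.coe_lt_coe_iff.2 hy.1), hy.2⟩
    have hnnU : 0 ≤ᵐ[volume.restrict (Ioc c x₀' ∪ {y : ℝ | x₀ < y ∧ (y : EReal) < r})]
        (fun y => (A - s y) * (2 * (b y)^2 / (ρ y * (σ y)^2))) := by
      filter_upwards [ae_restrict_mem hUmeas] with y hy
      have hyJ := hUJ y hy
      exact mul_nonneg (sub_nonneg.2 (hsleA y hyJ)) (hf0nonneg y)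
    set M₀ := ∫ y in (Ioc c x₀' ∪ {y : ℝ | x₀ < y ∧ (y : EReal) < r}),
      (A - s y) * (2 * (b y)^2 / (ρ y * (σ y)^2)) with hM₀def
    have hbd : ∀ x : ℝ, (ℓ < (x : EReal) ∧ (x : EReal) < r) → c ≤ x → vX x ≤ M₀ := by
      intro x hx hcx
      rw [hvX x]
      have hsub : Ioc c x ⊆ Ioc c x₀' ∪ {y : ℝ | x₀ < y ∧ (y : EReal) < r} := by
        intro y hy
        rcases le_or_gt y x₀' with h | h
        · exact Or.inl ⟨hy.1, h⟩
        · exact Or.inr ⟨lt_of_le_of_lt (le_max_right c x₀) h,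
            lt_of_le_of_lt (EReal.coe_le_coe_iff.2 hy.2) hx.2⟩
      calc (∫ y in c..x, (s x - s y) * (2 * (b y)^2 / (ρ y * (σ y)^2)))
          ≤ ∫ y in c..x, (A - s y) * (2 * (b y)^2 / (ρ y * (σ y)^2)) := by
            apply intervalIntegral.integral_mono_on hcx
              (hint2 (s x) c x hcJ hx).intervalIntegrable
              (hint2 A c x hcJ hx).intervalIntegrable
            intro y hy
            exact mul_le_mul_of_nonneg_right
              (sub_le_sub_right (hsleA x hx) _) (hf0nonneg y)
        _ = ∫ y in Ioc c x, (A - s y) * (2 * (b y)^2 / (ρ y * (σ y)^2)) :=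
            intervalIntegral.integral_of_le hcx
        _ ≤ M₀ := setIntegral_mono_set hintU hnnU (HasSubset.Subset.eventuallyLE hsub)
    rw [hvXr]
    refine lt_of_le_of_lt (iSup_le fun p => ?_) (EReal.coe_lt_top M₀)
    exact EReal.coe_le_coe_iff.2 (hbd p p.2.1 p.2.2)
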